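/- arXiv:0902.2206 — 4 statements merged into one kernel-verified Lean document; each statement's English description precedes it below -/
import Mathlib

section
/- The hashed inner product is an unbiased estimator of the true inner product: for any vectors x, x' in R^d, the expectation over uniformly random hash function h : {1,...,d} → {1,...,m} and uniformly random sign function ξ : {1,...,d} → {±1} (with h and ξ independent and each coordinate-wise independent) of ⟨x,x'⟩_φ = ∑_{i,j} ξ(i)ξ(j) x_i x'_j · [h(i)=h(j)] equals ⟨x,x'⟩ = ∑_i x_i x'_i. -/
open Finset

/-- Sign associated to a boolean. -/
noncomputable def sgn (b : Bool) : ℝ := if b then 1 else -1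

/-- Hashed inner product for fixed hash `h` and sign `ξ`. -/
noncomputable def hip {d m : ℕ} (h : Fin d → Fin m) (ξ : Fin d → Bool)
    (x x' : Fin d → ℝ) : ℝ :=
  ∑ k : Fin m,
    (∑ j ∈ Finset.univ.filter (fun j => h j = k), sgn (ξ j) * x j) *
    (∑ j ∈ Finset.univ.filter (fun j => h j = k), sgn (ξ j) * x' j)

/-- Expectation over the uniformly random pair `(h, ξ)`. -/
noncomputable def hashExp (d m : ℕ) (f : (Fin d → Fin m) → (Fin d → Bool) → ℝ) : ℝ :=
  (∑ h : Fin d → Fin m, ∑ ξ : Fin d → Bool, f h ξ) / ((m : ℝ) ^ d * 2 ^ d)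

lemma sgn_not (b : Bool) : sgn (!b) = -sgn b := by cases b <;> simp [sgn]

lemma sgn_sq (b : Bool) : sgn b * sgn b = 1 := by cases b <;> simp [sgn]

lemma sum_sgn_ne {d : ℕ} {i j : Fin d} (hij : i ≠ j) :
    ∑ ξ : Fin d → Bool, sgn (ξ i) * sgn (ξ j) = 0 := by
  have hinv : Function.Involutive (fun ξ : Fin d → Bool => Function.update ξ i (!ξ i)) := by
    intro ξ; funext k
    by_cases hk : k = i
    · subst hk; simp
    · simp [Function.update_of_ne hk]
  set e := Function.Involutive.toPerm _ hinv with he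
  have h1 : ∑ ξ : Fin d → Bool, sgn (ξ i) * sgn (ξ j)
      = ∑ ξ : Fin d → Bool, sgn ((e ξ) i) * sgn ((e ξ) j) :=
    (Equiv.sum_comp e (fun ξ => sgn (ξ i) * sgn (ξ j))).symm
  have h2 : ∀ ξ : Fin d → Bool,
      sgn ((e ξ) i) * sgn ((e ξ) j) = -(sgn (ξ i) * sgn (ξ j)) := by
    intro ξ
    have hp : e ξ = Function.update ξ i (!ξ i) := rfl
    rw [hp, Function.update_self, Function.update_of_ne (Ne.symm hij), sgn_not]
    ring
  simp only [h2, Finset.sum_neg_distrib] at h1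
  linarith

lemma hip_eq {d m : ℕ} (h : Fin d → Fin m) (ξ : Fin d → Bool) (x x' : Fin d → ℝ) :
    hip h ξ x x' = ∑ i : Fin d, ∑ j : Fin d,
      (if h j = h i then sgn (ξ i) * sgn (ξ j) else 0) * (x i * x' j) := by
  unfold hip
  simp_rw [Finset.sum_filter, Finset.sum_mul_sum]
  rw [Finset.sum_comm]
  refine Finset.sum_congr rfl fun i _ => ?_
  rw [Finset.sum_comm]
  refine Finset.sum_congr rfl fun j _ => ?_
  have hk : ∀ k : Fin m, (if h i = k then sgn (ξ i) * x i else 0) *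
      (if h j = k then sgn (ξ j) * x' j else 0)
      = if h i = k then (if h j = k then (sgn (ξ i) * x i) * (sgn (ξ j) * x' j) else 0)
        else 0 := by
    intro k; split_ifs <;> ring
  simp_rw [hk]
  rw [Finset.sum_ite_eq]
  simp only [Finset.mem_univ, if_true]
  split_ifs <;> ring

lemma sum3_comm {α β γ : Type*} [Fintype α] [Fintype β] [Fintype γ]
    (F : α → β → γ → ℝ) :
    (∑ a : α, ∑ b : β, ∑ c : γ, F a b c) = ∑ c : γ, ∑ a : α, ∑ b : β, F a b c :=
  calc (∑ a : α, ∑ b : β, ∑ c : γ, F a b c)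
      = ∑ a : α, ∑ c : γ, ∑ b : β, F a b c :=
        Finset.sum_congr rfl fun _ _ => Finset.sum_comm
    _ = ∑ c : γ, ∑ a : α, ∑ b : β, F a b c := Finset.sum_comm

/-- The hashed inner product is an unbiased estimator of the inner product. -/
theorem hash_kernel_unbiased (d m : ℕ) (hm : 0 < m) (x x' : Fin d → ℝ) :
    hashExp d m (fun h ξ => hip h ξ x x') = ∑ i : Fin d, x i * x' i := by
  unfold hashExp
  have key : ∀ i j : Fin d,
      (∑ h : Fin d → Fin m, ∑ ξ : Fin d → Bool,
        (if h j = h i then sgn (ξ i) * sgn (ξ j) else 0))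
      = if i = j then (m : ℝ) ^ d * 2 ^ d else 0 := by
    intro i j
    by_cases hij : i = j
    · subst hij
      simp only [if_pos rfl, sgn_sq]
      simp [Finset.sum_const, Fintype.card_fun]
    · rw [if_neg hij]
      have hz : ∀ h : Fin d → Fin m,
          (∑ ξ : Fin d → Bool, if h j = h i then sgn (ξ i) * sgn (ξ j) else 0) = 0 := by
        intro h
        by_cases hh : h j = h i
        · simp only [if_pos hh]; exact sum_sgn_ne hij
        · simp [hh]
      simp [hz]
  simp_rw [hip_eq]
  rw [sum3_comm (fun (h : Fin d → Fin m) (ξ : Fin d → Bool) (i : Fin d) => ∑ j : Fin d,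
      (if h j = h i then sgn (ξ i) * sgn (ξ j) else 0) * (x i * x' j))]
  have step : ∀ i : Fin d,
      (∑ h : Fin d → Fin m, ∑ ξ : Fin d → Bool, ∑ j : Fin d,
        (if h j = h i then sgn (ξ i) * sgn (ξ j) else 0) * (x i * x' j))
      = ∑ j : Fin d, (if i = j then (m : ℝ) ^ d * 2 ^ d else 0) * (x i * x' j) := by
    intro i
    rw [sum3_comm (fun (h : Fin d → Fin m) (ξ : Fin d → Bool) (j : Fin d) =>
      (if h j = h i then sgn (ξ i) * sgn (ξ j) else 0) * (x i * x' j))]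
    refine Finset.sum_congr rfl fun j _ => ?_
    rw [← key i j]
    simp_rw [Finset.sum_mul]
  simp_rw [step, ite_mul, zero_mul, Finset.sum_ite_eq, Finset.mem_univ, if_true]
  rw [← Finset.mul_sum]
  have hC : ((m : ℝ) ^ d * 2 ^ d) ≠ 0 := by
    have : (0 : ℝ) < m := by exact_mod_cast hm
    positivity
  field_simp
end

section
/- E[⟨x,x'⟩_φ²] = ⟨x,x'⟩² + (1/m)( ∑_{i≠j} x_i² (x'_j)² + ∑_{i≠j} x_i x'_i x_j x'_j ). -/
open Finset

/-! ### Auxiliary lemmas -/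

lemma sum_fn_prod {α β : Type*} [Fintype α] [DecidableEq α] [Fintype β] (g : α → β → ℝ) :
    ∑ f : α → β, ∏ t, g t (f t) = ∏ t, ∑ b, g t b := by
  symm
  rw [Finset.prod_univ_sum, Fintype.piFinset_univ]

lemma sum_swap3 {α β γ : Type*} [Fintype α] [Fintype β] [Fintype γ] (f : α → β → γ → ℝ) :
    ∑ a, ∑ b, ∑ c, f a b c = ∑ c, ∑ a, ∑ b, f a b c := by
  calc ∑ a, ∑ b, ∑ c, f a b c
      = ∑ a, ∑ c, ∑ b, f a b c := Finset.sum_congr rfl (fun a _ => Finset.sum_comm)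
    _ = ∑ c, ∑ a, ∑ b, f a b c := Finset.sum_comm

lemma csum {d : ℕ} (a : Fin d) (E : Fin d → ℝ) :
    ∑ q : Fin d, (if q = a then (1:ℝ) else 0) * E q = E a := by
  simp only [ite_mul, one_mul, zero_mul, Finset.sum_ite_eq', Finset.mem_univ, if_true]

/-- Sum over signs of a product of four signs. -/
lemma A_eval {d : ℕ} (i j p q : Fin d) :
    ∑ ξ : Fin d → Bool, sgn (ξ i) * sgn (ξ j) * sgn (ξ p) * sgn (ξ q)
      = if (i = j ∧ p = q) ∨ (i = p ∧ j = q) ∨ (i = q ∧ j = p) then (2:ℝ)^d else 0 := by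
  have key : ∀ ξ : Fin d → Bool, sgn (ξ i) * sgn (ξ j) * sgn (ξ p) * sgn (ξ q)
      = ∏ t, ((if t = i then sgn (ξ t) else 1) * (if t = j then sgn (ξ t) else 1) *
              (if t = p then sgn (ξ t) else 1) * (if t = q then sgn (ξ t) else 1)) := by
    intro ξ
    rw [Finset.prod_mul_distrib, Finset.prod_mul_distrib, Finset.prod_mul_distrib]
    simp [Finset.prod_ite_eq']
  simp only [key]
  rw [sum_fn_prod (fun t b => (if t = i then sgn b else 1) * (if t = j then sgn b else 1) *
              (if t = p then sgn b else 1) * (if t = q then sgn b else 1))]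
  split_ifs with hc
  · have hall : ∀ t : Fin d, (∑ b : Bool, ((if t = i then sgn b else 1) * (if t = j then sgn b else 1) *
              (if t = p then sgn b else 1) * (if t = q then sgn b else 1))) = 2 := by
      intro t
      have h1 : ∀ b : Bool, ((if t = i then sgn b else 1) * (if t = j then sgn b else 1) *
              (if t = p then sgn b else 1) * (if t = q then sgn b else 1)) = 1 := by
        intro b
        rcases hc with ⟨h, h'⟩ | ⟨h, h'⟩ | ⟨h, h'⟩ <;> subst h <;> subst h' <;>
          split_ifs <;> cases b <;> norm_num [sgn]
      rw [Finset.sum_congr rfl (fun b _ => h1 b)]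
      simp
    calc (∏ t : Fin d, ∑ b : Bool, ((if t = i then sgn b else 1) * (if t = j then sgn b else 1) *
              (if t = p then sgn b else 1) * (if t = q then sgn b else 1)))
        = ∏ _t : Fin d, (2:ℝ) := Finset.prod_congr rfl (fun t _ => hall t)
      _ = (2:ℝ)^d := by simp
  · have hz : ∃ w : Fin d, (∑ b : Bool, ((if w = i then sgn b else 1) * (if w = j then sgn b else 1) *
              (if w = p then sgn b else 1) * (if w = q then sgn b else 1))) = 0 := by
      by_cases hij : i = j
      · have hpq : p ≠ q := fun h => hc (Or.inl ⟨hij, h⟩)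
        by_cases hpi : p = i
        · refine ⟨q, ?_⟩
          have h1 : ¬ q = i := fun h => hpq (by rw [hpi, h])
          have h2 : ¬ q = j := fun h => h1 (h.trans hij.symm)
          have h3 : ¬ q = p := fun h => hpq h.symm
          norm_num [h1, h2, h3, sgn, Fintype.sum_bool]
        · refine ⟨p, ?_⟩
          have h2 : ¬ p = j := fun h => hpi (h.trans hij.symm)
          norm_num [hpi, h2, hpq, sgn, Fintype.sum_bool]
      · by_cases hip2 : i = p
        · have hjq : j ≠ q := fun h => hc (Or.inr (Or.inl ⟨hip2, h⟩))
          by_cases hqi : q = i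
          · refine ⟨j, ?_⟩
            have h1 : ¬ j = i := fun h => hij h.symm
            have h3 : ¬ j = p := fun h => h1 (h.trans hip2.symm)
            norm_num [h1, h3, hjq, sgn, Fintype.sum_bool]
          · refine ⟨q, ?_⟩
            have h2 : ¬ q = j := fun h => hjq h.symm
            have h3 : ¬ q = p := fun h => hqi (h.trans hip2.symm)
            norm_num [hqi, h2, h3, sgn, Fintype.sum_bool]
        · by_cases hiq2 : i = q
          · have hjp : j ≠ p := fun h => hc (Or.inr (Or.inr ⟨hiq2, h⟩))
            refine ⟨j, ?_⟩
            have h1 : ¬ j = i := fun h => hij h.symm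
            have h4 : ¬ j = q := fun h => hij (hiq2.trans h.symm)
            norm_num [h1, hjp, h4, sgn, Fintype.sum_bool]
          · refine ⟨i, ?_⟩
            norm_num [hij, hip2, hiq2, sgn, Fintype.sum_bool]
    obtain ⟨w, hw⟩ := hz
    exact Finset.prod_eq_zero (Finset.mem_univ w) hw

lemma B_diag {d m : ℕ} : ∑ _h : Fin d → Fin m, (1:ℝ) = (m:ℝ)^d := by
  simp [Finset.card_univ]

lemma B_off {d m : ℕ} (hm : 0 < m) {i j : Fin d} (hij : i ≠ j) :
    ∑ h : Fin d → Fin m, (if h i = h j then (1:ℝ) else 0) = (m:ℝ)^d / m := by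
  have hd : 2 ≤ d := by
    rcases i with ⟨iv, hiv⟩; rcases j with ⟨jv, hjv⟩
    have : iv ≠ jv := fun h => hij (by simp [Fin.ext_iff, h])
    omega
  have step1 : ∀ h : Fin d → Fin m, (if h i = h j then (1:ℝ) else 0)
      = ∑ k : Fin m, (if h i = k then (1:ℝ) else 0) * (if h j = k then 1 else 0) := by
    intro h
    simp only [ite_mul, one_mul, zero_mul]
    rw [Finset.sum_ite_eq univ (h i) (fun k => if h j = k then (1:ℝ) else 0)]
    simp [eq_comm]
  simp only [step1]
  rw [Finset.sum_comm]
  have inner : ∀ k : Fin m, (∑ h : Fin d → Fin m,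
      (if h i = k then (1:ℝ) else 0) * (if h j = k then 1 else 0)) = (m:ℝ)^(d-2) := by
    intro k
    have hg : ∀ h : Fin d → Fin m, (if h i = k then (1:ℝ) else 0) * (if h j = k then 1 else 0)
        = ∏ t, (if t = i then (if h t = k then (1:ℝ) else 0)
                else if t = j then (if h t = k then 1 else 0) else 1) := by
      intro h
      rw [← Finset.mul_prod_erase univ _ (Finset.mem_univ i),
          ← Finset.mul_prod_erase _ _ (Finset.mem_erase.mpr ⟨hij.symm, Finset.mem_univ j⟩),
          Finset.prod_eq_one, if_pos rfl, if_neg hij.symm, if_pos rfl]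
      · ring
      · intro t ht
        simp only [Finset.mem_erase] at ht
        rw [if_neg ht.2.1, if_neg ht.1]
    simp only [hg]
    rw [sum_fn_prod (fun t v => (if t = i then (if v = k then (1:ℝ) else 0)
                else if t = j then (if v = k then 1 else 0) else 1))]
    have hfac : ∀ t : Fin d, (∑ v : Fin m, (if t = i then (if v = k then (1:ℝ) else 0)
                else if t = j then (if v = k then 1 else 0) else 1))
        = if t = i then 1 else if t = j then 1 else (m:ℝ) := by
      intro t
      by_cases h1 : t = i <;> by_cases h2 : t = j <;>
        simp [h1, h2, Finset.sum_ite_eq' univ k (fun _ => (1:ℝ)), Finset.card_univ]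
    rw [Finset.prod_congr rfl (fun t _ => hfac t)]
    rw [← Finset.mul_prod_erase univ _ (Finset.mem_univ i),
        ← Finset.mul_prod_erase _ _ (Finset.mem_erase.mpr ⟨hij.symm, Finset.mem_univ j⟩),
        if_pos rfl, if_neg hij.symm, if_pos rfl]
    have hrest : ∏ t ∈ (univ.erase i).erase j,
        (if t = i then (1:ℝ) else if t = j then 1 else (m:ℝ)) = (m:ℝ)^(d-2) := by
      rw [Finset.prod_congr rfl (fun t ht => by
        simp only [Finset.mem_erase] at ht
        rw [if_neg ht.2.1, if_neg ht.1]), Finset.prod_const,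
        Finset.card_erase_of_mem (Finset.mem_erase.mpr ⟨hij.symm, Finset.mem_univ j⟩),
        Finset.card_erase_of_mem (Finset.mem_univ i), Finset.card_univ, Fintype.card_fin]
      congr 1
    simp [hrest]
  rw [Finset.sum_congr rfl (fun k _ => inner k), Finset.sum_const, Finset.card_univ,
      Fintype.card_fin, nsmul_eq_mul]
  have hm' : (m:ℝ) ≠ 0 := Nat.cast_ne_zero.mpr hm.ne'
  have hd2 : d - 2 + 1 + 1 = d := by omega
  have hpow : (m:ℝ)^d = (m:ℝ)^(d-2) * m * m := by
    calc (m:ℝ)^d = (m:ℝ)^(d-2+1+1) := by rw [hd2]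
      _ = (m:ℝ)^(d-2) * m * m := by rw [pow_succ, pow_succ]
  rw [hpow]
  field_simp

/-- The joint hash indicator sum. -/
noncomputable def BB (d m : ℕ) (i p j q : Fin d) : ℝ :=
  ∑ h : Fin d → Fin m, (if h i = h j then (1:ℝ) else 0) * (if h p = h q then 1 else 0)

lemma BB_pair_diag {d m : ℕ} (i p : Fin d) : BB d m i p i p = (m:ℝ)^d := by
  unfold BB
  simp [Finset.card_univ]

lemma BB_all_diag {d m : ℕ} (i : Fin d) : BB d m i i i i = (m:ℝ)^d :=
  BB_pair_diag i i

lemma BB_eval {d m : ℕ} (i j : Fin d) :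
    BB d m i i j j = ∑ h : Fin d → Fin m, (if h i = h j then (1:ℝ) else 0) := by
  unfold BB
  refine Finset.sum_congr rfl fun h _ => ?_
  split_ifs <;> norm_num

lemma BB_eval' {d m : ℕ} (i j : Fin d) :
    BB d m i j j i = ∑ h : Fin d → Fin m, (if h i = h j then (1:ℝ) else 0) := by
  unfold BB
  refine Finset.sum_congr rfl fun h _ => ?_
  split_ifs with h1 h2 h2 <;> simp_all [eq_comm]

/-- Indicator decomposition of the pairing condition. -/
lemma indic_split {d : ℕ} (i j p q : Fin d) :
    (if (i = j ∧ p = q) ∨ (i = p ∧ j = q) ∨ (i = q ∧ j = p) then (1:ℝ) else 0)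
    = (if j = i then (1:ℝ) else 0) * (if q = p then (1:ℝ) else 0)
    + (if p = i then (1:ℝ) else 0) * (if q = j then (1:ℝ) else 0)
    + (if p = j then (1:ℝ) else 0) * (if q = i then (1:ℝ) else 0)
    - 2 * ((if j = i then (1:ℝ) else 0) * ((if p = i then (1:ℝ) else 0) *
        (if q = i then (1:ℝ) else 0))) := by
  by_cases h1 : i = j <;> by_cases h2 : p = q <;> by_cases h3 : i = p <;>
    by_cases h4 : j = q <;> by_cases h5 : i = q <;> by_cases h6 : j = p <;>
    simp_all [eq_comm] <;> norm_num

/-- Expansion of the hashed inner product as a double sum. -/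
lemma hip_expand {d m : ℕ} (x x' : Fin d → ℝ) (h : Fin d → Fin m) (ξ : Fin d → Bool) :
    hip h ξ x x' = ∑ i, ∑ j, (if h i = h j then (1:ℝ) else 0) *
      (sgn (ξ i) * x i) * (sgn (ξ j) * x' j) := by
  unfold hip
  rw [Finset.sum_congr rfl (fun k _ => Finset.sum_mul_sum _ _ _ _)]
  simp only [Finset.sum_filter]
  rw [Finset.sum_comm]
  refine Finset.sum_congr rfl fun i _ => ?_
  rw [Finset.sum_ite_eq univ (h i)]
  simp only [Finset.mem_univ, if_true]
  refine Finset.sum_congr rfl fun j _ => ?_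
  by_cases hh : h i = h j
  · simp [hh]
  · simp [hh, Ne.symm hh]

lemma hip_sq {d m : ℕ} (x x' : Fin d → ℝ) (h : Fin d → Fin m) (ξ : Fin d → Bool) :
    (hip h ξ x x')^2 = ∑ i, ∑ p, ∑ j, ∑ q,
      ((if h i = h j then (1:ℝ) else 0) * (if h p = h q then 1 else 0)) *
      ((sgn (ξ i) * sgn (ξ j) * sgn (ξ p) * sgn (ξ q)) * (x i * x' j * (x p * x' q))) := by
  rw [pow_two, hip_expand x x' h ξ, Finset.sum_mul_sum]
  refine Finset.sum_congr rfl fun i _ => ?_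
  refine Finset.sum_congr rfl fun p _ => ?_
  rw [Finset.sum_mul_sum]
  refine Finset.sum_congr rfl fun j _ => ?_
  refine Finset.sum_congr rfl fun q _ => ?_
  ring

lemma swap_hxi {d m : ℕ} (f : (Fin d → Fin m) → (Fin d → Bool) → Fin d → Fin d → Fin d → Fin d → ℝ) :
    ∑ h : Fin d → Fin m, ∑ ξ : Fin d → Bool, ∑ i, ∑ p, ∑ j, ∑ q, f h ξ i p j q
      = ∑ i, ∑ p, ∑ j, ∑ q, ∑ h : Fin d → Fin m, ∑ ξ : Fin d → Bool, f h ξ i p j q := by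
  rw [sum_swap3 (fun h ξ i => ∑ p, ∑ j, ∑ q, f h ξ i p j q)]
  refine Finset.sum_congr rfl fun i _ => ?_
  rw [sum_swap3 (fun h ξ p => ∑ j, ∑ q, f h ξ i p j q)]
  refine Finset.sum_congr rfl fun p _ => ?_
  rw [sum_swap3 (fun h ξ j => ∑ q, f h ξ i p j q)]
  refine Finset.sum_congr rfl fun j _ => ?_
  exact sum_swap3 (fun h ξ q => f h ξ i p j q)

/-- Evaluation of the main fourfold sum. -/
lemma sum4_eval {d m : ℕ} (hm : 0 < m) (x x' : Fin d → ℝ) :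
    ∑ i, ∑ p, ∑ j, ∑ q, (BB d m i p j q) *
        ((if (i = j ∧ p = q) ∨ (i = p ∧ j = q) ∨ (i = q ∧ j = p) then (2:ℝ)^d else 0) *
          (x i * x' j * (x p * x' q)))
    = (2:ℝ)^d * ((m:ℝ)^d * (∑ i, x i * x' i)^2)
      + (2:ℝ)^d * (((m:ℝ)^d / m) *
          ((∑ i, ∑ j ∈ Finset.univ.erase i, x i ^ 2 * x' j ^ 2)
            + (∑ i, ∑ j ∈ Finset.univ.erase i, x i * x' i * x j * x' j))) := by
  have split : ∀ i p j q : Fin d, (BB d m i p j q) *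
        ((if (i = j ∧ p = q) ∨ (i = p ∧ j = q) ∨ (i = q ∧ j = p) then (2:ℝ)^d else 0) *
          (x i * x' j * (x p * x' q)))
      = (2:ℝ)^d * ((if j = i then (1:ℝ) else 0) * ((if q = p then (1:ℝ) else 0) *
          (BB d m i p j q * (x i * x' j * (x p * x' q)))))
      + (2:ℝ)^d * ((if p = i then (1:ℝ) else 0) * ((if q = j then (1:ℝ) else 0) *
          (BB d m i p j q * (x i * x' j * (x p * x' q)))))
      + (2:ℝ)^d * ((if p = j then (1:ℝ) else 0) * ((if q = i then (1:ℝ) else 0) *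
          (BB d m i p j q * (x i * x' j * (x p * x' q)))))
      - (2:ℝ)^d * 2 * ((if j = i then (1:ℝ) else 0) * ((if p = i then (1:ℝ) else 0) *
          ((if q = i then (1:ℝ) else 0) * (BB d m i p j q * (x i * x' j * (x p * x' q)))))) := by
    intro i p j q
    have e1 : (if (i = j ∧ p = q) ∨ (i = p ∧ j = q) ∨ (i = q ∧ j = p) then (2:ℝ)^d else 0)
        = (2:ℝ)^d * (if (i = j ∧ p = q) ∨ (i = p ∧ j = q) ∨ (i = q ∧ j = p) then (1:ℝ) else 0) := by
      split_ifs <;> ring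
    rw [e1, indic_split]
    ring
  rw [Finset.sum_congr rfl fun i _ => Finset.sum_congr rfl fun p _ =>
    Finset.sum_congr rfl fun j _ => Finset.sum_congr rfl fun q _ => split i p j q]
  simp only [Finset.sum_add_distrib, Finset.sum_sub_distrib]
  have Bdiag2 : ∀ i : Fin d, (∑ h : Fin d → Fin m, if h i = h i then (1:ℝ) else 0) = (m:ℝ)^d := by
    intro i; simp [Finset.card_univ]
  have P1 : ∑ i, ∑ p, ∑ j, ∑ q, (2:ℝ)^d * ((if j = i then (1:ℝ) else 0) *
        ((if q = p then (1:ℝ) else 0) * (BB d m i p j q * (x i * x' j * (x p * x' q)))))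
      = (2:ℝ)^d * ((m:ℝ)^d * (∑ i, x i * x' i)^2) := by
    have hq : ∀ i p j : Fin d, (∑ q, (2:ℝ)^d * ((if j = i then (1:ℝ) else 0) *
          ((if q = p then (1:ℝ) else 0) * (BB d m i p j q * (x i * x' j * (x p * x' q))))))
        = (if j = i then (1:ℝ) else 0) *
            ((2:ℝ)^d * (BB d m i p j p * (x i * x' j * (x p * x' p)))) := by
      intro i p j
      rw [Finset.sum_congr rfl (fun q _ =>
        show (2:ℝ)^d * ((if j = i then (1:ℝ) else 0) *
            ((if q = p then (1:ℝ) else 0) * (BB d m i p j q * (x i * x' j * (x p * x' q)))))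
          = (if q = p then (1:ℝ) else 0) * ((if j = i then (1:ℝ) else 0) *
            ((2:ℝ)^d * (BB d m i p j q * (x i * x' j * (x p * x' q))))) from by ring)]
      exact csum p _
    have hj : ∀ i p : Fin d, (∑ j, (if j = i then (1:ℝ) else 0) *
          ((2:ℝ)^d * (BB d m i p j p * (x i * x' j * (x p * x' p)))))
        = (2:ℝ)^d * (BB d m i p i p * (x i * x' i * (x p * x' p))) := fun i p => csum i _
    calc ∑ i, ∑ p, ∑ j, ∑ q, (2:ℝ)^d * ((if j = i then (1:ℝ) else 0) *
          ((if q = p then (1:ℝ) else 0) * (BB d m i p j q * (x i * x' j * (x p * x' q)))))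
        = ∑ i, ∑ p, (2:ℝ)^d * (BB d m i p i p * (x i * x' i * (x p * x' p))) :=
          Finset.sum_congr rfl fun i _ => Finset.sum_congr rfl fun p _ => by
            rw [Finset.sum_congr rfl fun j _ => hq i p j]; exact hj i p
      _ = ∑ i, ∑ p, (2:ℝ)^d * ((m:ℝ)^d * (x i * x' i * (x p * x' p))) :=
          Finset.sum_congr rfl fun i _ => Finset.sum_congr rfl fun p _ => by
            rw [BB_pair_diag]
      _ = (2:ℝ)^d * ((m:ℝ)^d * (∑ i, x i * x' i)^2) := by
          rw [pow_two, Finset.sum_mul_sum]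
          simp only [Finset.mul_sum]
  have P2 : ∑ i, ∑ p, ∑ j, ∑ q, (2:ℝ)^d * ((if p = i then (1:ℝ) else 0) *
        ((if q = j then (1:ℝ) else 0) * (BB d m i p j q * (x i * x' j * (x p * x' q)))))
      = (2:ℝ)^d * (((m:ℝ)^d / m) * (∑ i, ∑ j ∈ Finset.univ.erase i, x i ^ 2 * x' j ^ 2))
        + (2:ℝ)^d * ((m:ℝ)^d * (∑ i, x i * x' i * (x i * x' i))) := by
    have hq : ∀ i p j : Fin d, (∑ q, (2:ℝ)^d * ((if p = i then (1:ℝ) else 0) *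
          ((if q = j then (1:ℝ) else 0) * (BB d m i p j q * (x i * x' j * (x p * x' q))))))
        = (if p = i then (1:ℝ) else 0) *
            ((2:ℝ)^d * (BB d m i p j j * (x i * x' j * (x p * x' j)))) := by
      intro i p j
      rw [Finset.sum_congr rfl (fun q _ =>
        show (2:ℝ)^d * ((if p = i then (1:ℝ) else 0) *
            ((if q = j then (1:ℝ) else 0) * (BB d m i p j q * (x i * x' j * (x p * x' q)))))
          = (if q = j then (1:ℝ) else 0) * ((if p = i then (1:ℝ) else 0) *
            ((2:ℝ)^d * (BB d m i p j q * (x i * x' j * (x p * x' q))))) from by ring)]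
      exact csum j _
    calc ∑ i, ∑ p, ∑ j, ∑ q, (2:ℝ)^d * ((if p = i then (1:ℝ) else 0) *
          ((if q = j then (1:ℝ) else 0) * (BB d m i p j q * (x i * x' j * (x p * x' q)))))
        = ∑ i, ∑ p, ∑ j, (if p = i then (1:ℝ) else 0) *
            ((2:ℝ)^d * (BB d m i p j j * (x i * x' j * (x p * x' j)))) :=
          Finset.sum_congr rfl fun i _ => Finset.sum_congr rfl fun p _ =>
            Finset.sum_congr rfl fun j _ => hq i p j
      _ = ∑ i, ∑ j, (2:ℝ)^d * (BB d m i i j j * (x i * x' j * (x i * x' j))) := by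
          refine Finset.sum_congr rfl fun i _ => ?_
          rw [Finset.sum_comm]
          exact Finset.sum_congr rfl fun j _ => csum i _
      _ = ∑ i, ∑ j, (2:ℝ)^d * ((∑ h : Fin d → Fin m, if h i = h j then (1:ℝ) else 0) *
            (x i * x' j * (x i * x' j))) :=
          Finset.sum_congr rfl fun i _ => Finset.sum_congr rfl fun j _ => by rw [BB_eval]
      _ = ∑ i, (∑ j ∈ Finset.univ.erase i, (2:ℝ)^d * (((m:ℝ)^d / m) * (x i * x' j * (x i * x' j)))
            + (2:ℝ)^d * ((m:ℝ)^d * (x i * x' i * (x i * x' i)))) := by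
          refine Finset.sum_congr rfl fun i _ => ?_
          rw [← Finset.sum_erase_add _ _ (Finset.mem_univ i), Bdiag2 i]
          congr 1
          refine Finset.sum_congr rfl fun j hj => ?_
          rw [B_off hm (Ne.symm (Finset.mem_erase.1 hj).1)]
      _ = _ := by
          rw [Finset.sum_add_distrib]
          congr 1
          · simp only [Finset.mul_sum]
            exact Finset.sum_congr rfl fun i _ => Finset.sum_congr rfl fun j _ => by ring
          · simp only [Finset.mul_sum]
  have P3 : ∑ i, ∑ p, ∑ j, ∑ q, (2:ℝ)^d * ((if p = j then (1:ℝ) else 0) *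
        ((if q = i then (1:ℝ) else 0) * (BB d m i p j q * (x i * x' j * (x p * x' q)))))
      = (2:ℝ)^d * (((m:ℝ)^d / m) * (∑ i, ∑ j ∈ Finset.univ.erase i, x i * x' i * x j * x' j))
        + (2:ℝ)^d * ((m:ℝ)^d * (∑ i, x i * x' i * (x i * x' i))) := by
    have hq : ∀ i p j : Fin d, (∑ q, (2:ℝ)^d * ((if p = j then (1:ℝ) else 0) *
          ((if q = i then (1:ℝ) else 0) * (BB d m i p j q * (x i * x' j * (x p * x' q))))))
        = (if p = j then (1:ℝ) else 0) *
            ((2:ℝ)^d * (BB d m i p j i * (x i * x' j * (x p * x' i)))) := by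
      intro i p j
      rw [Finset.sum_congr rfl (fun q _ =>
        show (2:ℝ)^d * ((if p = j then (1:ℝ) else 0) *
            ((if q = i then (1:ℝ) else 0) * (BB d m i p j q * (x i * x' j * (x p * x' q)))))
          = (if q = i then (1:ℝ) else 0) * ((if p = j then (1:ℝ) else 0) *
            ((2:ℝ)^d * (BB d m i p j q * (x i * x' j * (x p * x' q))))) from by ring)]
      exact csum i _
    calc ∑ i, ∑ p, ∑ j, ∑ q, (2:ℝ)^d * ((if p = j then (1:ℝ) else 0) *
          ((if q = i then (1:ℝ) else 0) * (BB d m i p j q * (x i * x' j * (x p * x' q)))))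
        = ∑ i, ∑ p, ∑ j, (if p = j then (1:ℝ) else 0) *
            ((2:ℝ)^d * (BB d m i p j i * (x i * x' j * (x p * x' i)))) :=
          Finset.sum_congr rfl fun i _ => Finset.sum_congr rfl fun p _ =>
            Finset.sum_congr rfl fun j _ => hq i p j
      _ = ∑ i, ∑ j, (2:ℝ)^d * (BB d m i j j i * (x i * x' j * (x j * x' i))) := by
          refine Finset.sum_congr rfl fun i _ => ?_
          rw [Finset.sum_comm]
          exact Finset.sum_congr rfl fun j _ => csum j _
      _ = ∑ i, ∑ j, (2:ℝ)^d * ((∑ h : Fin d → Fin m, if h i = h j then (1:ℝ) else 0) *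
            (x i * x' j * (x j * x' i))) :=
          Finset.sum_congr rfl fun i _ => Finset.sum_congr rfl fun j _ => by rw [BB_eval']
      _ = ∑ i, (∑ j ∈ Finset.univ.erase i, (2:ℝ)^d * (((m:ℝ)^d / m) * (x i * x' j * (x j * x' i)))
            + (2:ℝ)^d * ((m:ℝ)^d * (x i * x' i * (x i * x' i)))) := by
          refine Finset.sum_congr rfl fun i _ => ?_
          rw [← Finset.sum_erase_add _ _ (Finset.mem_univ i), Bdiag2 i]
          congr 1
          refine Finset.sum_congr rfl fun j hj => ?_
          rw [B_off hm (Ne.symm (Finset.mem_erase.1 hj).1)]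
      _ = _ := by
          rw [Finset.sum_add_distrib]
          congr 1
          · simp only [Finset.mul_sum]
            exact Finset.sum_congr rfl fun i _ => Finset.sum_congr rfl fun j _ => by ring
          · simp only [Finset.mul_sum]
  have P4 : ∑ i, ∑ p, ∑ j, ∑ q, (2:ℝ)^d * 2 * ((if j = i then (1:ℝ) else 0) *
        ((if p = i then (1:ℝ) else 0) *
          ((if q = i then (1:ℝ) else 0) * (BB d m i p j q * (x i * x' j * (x p * x' q))))))
      = (2:ℝ)^d * 2 * ((m:ℝ)^d * (∑ i, x i * x' i * (x i * x' i))) := by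
    have hq : ∀ i p j : Fin d, (∑ q, (2:ℝ)^d * 2 * ((if j = i then (1:ℝ) else 0) *
          ((if p = i then (1:ℝ) else 0) *
            ((if q = i then (1:ℝ) else 0) * (BB d m i p j q * (x i * x' j * (x p * x' q)))))))
        = (if j = i then (1:ℝ) else 0) * ((if p = i then (1:ℝ) else 0) *
            ((2:ℝ)^d * 2 * (BB d m i p j i * (x i * x' j * (x p * x' i))))) := by
      intro i p j
      rw [Finset.sum_congr rfl (fun q _ =>
        show (2:ℝ)^d * 2 * ((if j = i then (1:ℝ) else 0) *
            ((if p = i then (1:ℝ) else 0) *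
              ((if q = i then (1:ℝ) else 0) * (BB d m i p j q * (x i * x' j * (x p * x' q))))))
          = (if q = i then (1:ℝ) else 0) * ((if j = i then (1:ℝ) else 0) *
            ((if p = i then (1:ℝ) else 0) *
              ((2:ℝ)^d * 2 * (BB d m i p j q * (x i * x' j * (x p * x' q)))))) from by ring)]
      exact csum i _
    calc ∑ i, ∑ p, ∑ j, ∑ q, (2:ℝ)^d * 2 * ((if j = i then (1:ℝ) else 0) *
          ((if p = i then (1:ℝ) else 0) *
            ((if q = i then (1:ℝ) else 0) * (BB d m i p j q * (x i * x' j * (x p * x' q))))))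
        = ∑ i, ∑ p, ∑ j, (if j = i then (1:ℝ) else 0) * ((if p = i then (1:ℝ) else 0) *
            ((2:ℝ)^d * 2 * (BB d m i p j i * (x i * x' j * (x p * x' i))))) :=
          Finset.sum_congr rfl fun i _ => Finset.sum_congr rfl fun p _ =>
            Finset.sum_congr rfl fun j _ => hq i p j
      _ = ∑ i, ∑ p, (if p = i then (1:ℝ) else 0) *
            ((2:ℝ)^d * 2 * (BB d m i p i i * (x i * x' i * (x p * x' i)))) :=
          Finset.sum_congr rfl fun i _ => Finset.sum_congr rfl fun p _ => csum i _
      _ = ∑ i, (2:ℝ)^d * 2 * (BB d m i i i i * (x i * x' i * (x i * x' i))) :=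
          Finset.sum_congr rfl fun i _ => csum i _
      _ = ∑ i, (2:ℝ)^d * 2 * ((m:ℝ)^d * (x i * x' i * (x i * x' i))) :=
          Finset.sum_congr rfl fun i _ => by rw [BB_all_diag]
      _ = _ := by simp only [Finset.mul_sum]
  rw [P1, P2, P3, P4]
  ring

/-- Second moment of the hashed inner product:
`E[⟨x,x'⟩_φ²] = ⟨x,x'⟩² + (1/m)(∑_{i≠j} x_i² x'_j² + ∑_{i≠j} x_i x'_i x_j x'_j)`. -/
theorem hash_kernel_second_moment (d m : ℕ) (hm : 0 < m) (x x' : Fin d → ℝ) :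
    hashExp d m (fun h ξ => (hip h ξ x x') ^ 2) =
      (∑ i : Fin d, x i * x' i) ^ 2 +
        (1 / (m : ℝ)) *
          ((∑ i : Fin d, ∑ j ∈ Finset.univ.erase i, x i ^ 2 * x' j ^ 2) +
           (∑ i : Fin d, ∑ j ∈ Finset.univ.erase i, x i * x' i * x j * x' j)) := by
  unfold hashExp
  have hnum : (∑ h : Fin d → Fin m, ∑ ξ : Fin d → Bool, (hip h ξ x x') ^ 2)
      = (2:ℝ)^d * ((m:ℝ)^d * (∑ i, x i * x' i)^2)
        + (2:ℝ)^d * (((m:ℝ)^d / m) *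
            ((∑ i, ∑ j ∈ Finset.univ.erase i, x i ^ 2 * x' j ^ 2)
              + (∑ i, ∑ j ∈ Finset.univ.erase i, x i * x' i * x j * x' j))) := by
    calc (∑ h : Fin d → Fin m, ∑ ξ : Fin d → Bool, (hip h ξ x x') ^ 2)
        = ∑ h : Fin d → Fin m, ∑ ξ : Fin d → Bool, ∑ i, ∑ p, ∑ j, ∑ q,
            ((if h i = h j then (1:ℝ) else 0) * (if h p = h q then 1 else 0)) *
            ((sgn (ξ i) * sgn (ξ j) * sgn (ξ p) * sgn (ξ q)) * (x i * x' j * (x p * x' q))) :=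
          Finset.sum_congr rfl fun h _ => Finset.sum_congr rfl fun ξ _ => hip_sq x x' h ξ
      _ = ∑ i, ∑ p, ∑ j, ∑ q, ∑ h : Fin d → Fin m, ∑ ξ : Fin d → Bool,
            ((if h i = h j then (1:ℝ) else 0) * (if h p = h q then 1 else 0)) *
            ((sgn (ξ i) * sgn (ξ j) * sgn (ξ p) * sgn (ξ q)) * (x i * x' j * (x p * x' q))) :=
          swap_hxi _
      _ = ∑ i, ∑ p, ∑ j, ∑ q, (BB d m i p j q) *
            ((if (i = j ∧ p = q) ∨ (i = p ∧ j = q) ∨ (i = q ∧ j = p) then (2:ℝ)^d else 0) *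
              (x i * x' j * (x p * x' q))) := by
          refine Finset.sum_congr rfl fun i _ => Finset.sum_congr rfl fun p _ =>
            Finset.sum_congr rfl fun j _ => Finset.sum_congr rfl fun q _ => ?_
          calc ∑ h : Fin d → Fin m, ∑ ξ : Fin d → Bool,
                ((if h i = h j then (1:ℝ) else 0) * (if h p = h q then 1 else 0)) *
                ((sgn (ξ i) * sgn (ξ j) * sgn (ξ p) * sgn (ξ q)) * (x i * x' j * (x p * x' q)))
              = ∑ h : Fin d → Fin m,
                ((if h i = h j then (1:ℝ) else 0) * (if h p = h q then 1 else 0)) *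
                ((∑ ξ : Fin d → Bool, sgn (ξ i) * sgn (ξ j) * sgn (ξ p) * sgn (ξ q)) *
                  (x i * x' j * (x p * x' q))) := by
                refine Finset.sum_congr rfl fun h _ => ?_
                rw [← Finset.mul_sum, ← Finset.sum_mul]
            _ = (BB d m i p j q) *
                ((∑ ξ : Fin d → Bool, sgn (ξ i) * sgn (ξ j) * sgn (ξ p) * sgn (ξ q)) *
                  (x i * x' j * (x p * x' q))) := by
                rw [← Finset.sum_mul]
                rfl
            _ = _ := by rw [A_eval]
      _ = _ := sum4_eval hm x x'
  rw [hnum]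
  have hm' : (m:ℝ) ≠ 0 := Nat.cast_ne_zero.mpr hm.ne'
  have hmd : (m:ℝ)^d ≠ 0 := pow_ne_zero _ hm'
  have h2d : (2:ℝ)^d ≠ 0 := pow_ne_zero _ two_ne_zero
  field_simp
end

section
/- (Weighted balls-into-bins, fixed-bin step) Let x ∈ R^d with ‖x‖₂ = 1 and ‖x‖_∞ ≤ η where η = 1/(2√(m log(m/δ))), and let h : Fin d → Fin m be i.i.d. uniform. For any fixed bucket i, Pr[ ∑_{j : h(j)=i} x_j² > 2/m ] ≤ δ/m, assuming 0 < δ < m. -/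
open Finset
open scoped Classical

/-- Probability of an event over a uniformly random hash function `h : Fin d → Fin m`. -/
noncomputable def hPr (d m : ℕ) (P : (Fin d → Fin m) → Prop) : ℝ :=
  ((Finset.univ.filter (fun h : Fin d → Fin m => P h)).card : ℝ) / ((m : ℝ) ^ d)

private lemma exp_le_quad {u : ℝ} (h0 : 0 ≤ u) (h1 : u ≤ 1) :
    Real.exp u ≤ 1 + u + u ^ 2 := by
  have := Real.exp_bound' h0 h1 (n := 2) (by norm_num)
  have hsum : (∑ m ∈ Finset.range 2, u ^ m / m.factorial) = 1 + u := by
    simp [Finset.sum_range_succ]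
  rw [hsum] at this
  norm_num [Nat.factorial] at this
  nlinarith [sq_nonneg u]

/-- Weighted balls-into-bins, fixed-bin step: if `‖x‖₂ = 1` and
`‖x‖_∞ ≤ 1/(2√(m log(m/δ)))`, then for any fixed bucket `i`,
`Pr[∑_{j : h(j)=i} x_j² > 2/m] ≤ δ/m`. -/
theorem balls_bins_fixed_bin (d m : ℕ) (hm : 0 < m) (δ : ℝ) (hδ : 0 < δ)
    (hδm : δ < m) (x : Fin d → ℝ) (hx : ∑ j : Fin d, x j ^ 2 = 1)
    (hinf : ∀ j : Fin d, |x j| ≤ 1 / (2 * Real.sqrt (m * Real.log (m / δ))))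
    (i : Fin m) :
    hPr d m (fun h => (2 : ℝ) / m <
      ∑ j ∈ Finset.univ.filter (fun j => h j = i), x j ^ 2) ≤ δ / m := by
  classical
  have hmR : (0 : ℝ) < m := by exact_mod_cast hm
  set L : ℝ := Real.log ((m : ℝ) / δ) with hLdef
  have hL : 0 < L := Real.log_pos (by rw [lt_div_iff₀ hδ]; linarith)
  set lam : ℝ := 2 * m * L with hlamdef
  have hlam : 0 < lam := by positivity
  have hη2 : ∀ j, x j ^ 2 ≤ 1 / (4 * m * L) := by
    intro j
    have habs : 0 ≤ |x j| := abs_nonneg _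
    have hml : (0 : ℝ) ≤ (m : ℝ) * L := by positivity
    have hsqrt : Real.sqrt ((m : ℝ) * L) ^ 2 = (m : ℝ) * L := Real.sq_sqrt hml
    have h2 : |x j| ^ 2 ≤ (1 / (2 * Real.sqrt ((m : ℝ) * L))) ^ 2 :=
      pow_le_pow_left₀ habs (hinf j) 2
    calc x j ^ 2 = |x j| ^ 2 := (sq_abs _).symm
      _ ≤ (1 / (2 * Real.sqrt ((m : ℝ) * L))) ^ 2 := h2
      _ = 1 / (4 * ((m : ℝ) * L)) := by
          rw [div_pow, mul_pow, hsqrt]; norm_num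
      _ = 1 / (4 * m * L) := by ring_nf
  set S : (Fin d → Fin m) → ℝ :=
    fun h => ∑ j ∈ Finset.univ.filter (fun j => h j = i), x j ^ 2 with hSdef
  -- Step 1: count ≤ exponential sum
  have h1 : ((Finset.univ.filter (fun h : Fin d → Fin m => (2 : ℝ) / m < S h)).card : ℝ)
      ≤ ∑ h : Fin d → Fin m, Real.exp (lam * (S h - 2 / m)) := by
    rw [Finset.card_eq_sum_ones, Nat.cast_sum]
    calc (∑ h ∈ Finset.univ.filter (fun h : Fin d → Fin m => (2 : ℝ) / m < S h), ((1:ℕ):ℝ))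
        ≤ ∑ h ∈ Finset.univ.filter (fun h : Fin d → Fin m => (2 : ℝ) / m < S h),
            Real.exp (lam * (S h - 2 / m)) := by
          apply Finset.sum_le_sum
          intro h hh
          have hlt := (Finset.mem_filter.1 hh).2
          have hnn : 0 ≤ lam * (S h - 2 / m) := mul_nonneg hlam.le (by linarith)
          simpa using Real.one_le_exp hnn
      _ ≤ ∑ h : Fin d → Fin m, Real.exp (lam * (S h - 2 / m)) := by
          apply Finset.sum_le_sum_of_subset_of_nonneg (Finset.filter_subset _ _)
          intro h _ _; positivity
  have h1' : ∀ h : Fin d → Fin m, Real.exp (lam * (S h - 2 / m))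
      = Real.exp (-(2 * lam / m)) * Real.exp (lam * S h) := by
    intro h
    rw [← Real.exp_add]; ring_nf
  -- Step 2: sum = product
  have h2 : (∑ h : Fin d → Fin m, Real.exp (lam * S h))
      = ∏ j : Fin d, ((m : ℝ) - 1 + Real.exp (lam * x j ^ 2)) := by
    have hrw : ∀ h : Fin d → Fin m, Real.exp (lam * S h)
        = ∏ j : Fin d, Real.exp (lam * (if h j = i then x j ^ 2 else 0)) := by
      intro h
      rw [← Real.exp_sum, ← Finset.mul_sum]
      congr 1
      rw [hSdef]
      simp [Finset.sum_filter]
    simp only [hrw]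
    rw [← Fintype.prod_sum (fun j (v : Fin m) => Real.exp (lam * (if v = i then x j ^ 2 else 0)))]
    apply Finset.prod_congr rfl
    intro j _
    have hrw2 : (∑ v : Fin m, Real.exp (lam * (if v = i then x j ^ 2 else 0)))
        = ∑ v : Fin m, ((if v = i then Real.exp (lam * x j ^ 2) - 1 else 0) + 1) := by
      apply Finset.sum_congr rfl
      intro v _
      by_cases hv : v = i <;> simp [hv]
    rw [hrw2, Finset.sum_add_distrib, Finset.sum_ite_eq' Finset.univ i]
    simp [Finset.card_univ]
    ring
  -- Step 3: product bound
  have h3 : (∏ j : Fin d, ((m : ℝ) - 1 + Real.exp (lam * x j ^ 2)))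
      ≤ (m : ℝ) ^ d * Real.exp (∑ j : Fin d, (Real.exp (lam * x j ^ 2) - 1) / m) := by
    have hrw : ((m : ℝ)) ^ d * Real.exp (∑ j : Fin d, (Real.exp (lam * x j ^ 2) - 1) / m)
        = ∏ j : Fin d, ((m : ℝ) * Real.exp ((Real.exp (lam * x j ^ 2) - 1) / m)) := by
      rw [Finset.prod_mul_distrib, Real.exp_sum]
      simp [Finset.card_univ]
    rw [hrw]
    apply Finset.prod_le_prod
    · intro j _
      have : (1 : ℝ) ≤ Real.exp (lam * x j ^ 2) := Real.one_le_exp (by positivity)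
      linarith
    · intro j _
      have h0 : (Real.exp (lam * x j ^ 2) - 1) / m + 1
          ≤ Real.exp ((Real.exp (lam * x j ^ 2) - 1) / m) := Real.add_one_le_exp _
      have heq : (m : ℝ) - 1 + Real.exp (lam * x j ^ 2)
          = (m : ℝ) * ((Real.exp (lam * x j ^ 2) - 1) / m + 1) := by
        field_simp
        ring
      rw [heq]
      exact mul_le_mul_of_nonneg_left h0 hmR.le
  -- Step 4: the exponent sum
  have h4 : (∑ j : Fin d, (Real.exp (lam * x j ^ 2) - 1) / m) ≤ 3 * L := by
    have key : ∀ j : Fin d, Real.exp (lam * x j ^ 2) - 1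
        ≤ (lam + lam ^ 2 * (1 / (4 * m * L))) * x j ^ 2 := by
      intro j
      set u : ℝ := lam * x j ^ 2 with hu
      have hu0 : 0 ≤ u := by positivity
      have hle : u ≤ lam * (1 / (4 * m * L)) :=
        mul_le_mul_of_nonneg_left (hη2 j) hlam.le
      have heq : lam * (1 / (4 * m * L)) = 1 / 2 := by
        rw [hlamdef, mul_one_div, div_eq_div_iff (by positivity) (by norm_num)]
        ring
      have hu1 : u ≤ 1 := by linarith
      have hexp := exp_le_quad hu0 hu1
      have hsq : u ^ 2 = lam ^ 2 * x j ^ 2 * x j ^ 2 := by rw [hu]; ring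
      have hx2 : lam ^ 2 * x j ^ 2 * x j ^ 2 ≤ lam ^ 2 * (1 / (4 * m * L)) * x j ^ 2 := by
        apply mul_le_mul_of_nonneg_right _ (sq_nonneg _)
        exact mul_le_mul_of_nonneg_left (hη2 j) (by positivity)
      nlinarith
    calc (∑ j : Fin d, (Real.exp (lam * x j ^ 2) - 1) / m)
        ≤ ∑ j : Fin d, ((lam + lam ^ 2 * (1 / (4 * m * L))) * x j ^ 2) / m := by
          apply Finset.sum_le_sum
          intro j _
          gcongr
          exact key j
      _ = (lam + lam ^ 2 * (1 / (4 * m * L))) / m := by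
          rw [← Finset.sum_div, ← Finset.mul_sum, hx, mul_one]
      _ = 3 * L := by
          rw [hlamdef]
          field_simp
          ring
  -- assemble
  unfold hPr
  rw [div_le_div_iff₀ (by positivity) hmR]
  have hstart : ((Finset.univ.filter (fun h : Fin d → Fin m => (2 : ℝ) / m <
        ∑ j ∈ Finset.univ.filter (fun j => h j = i), x j ^ 2)).card : ℝ)
      = ((Finset.univ.filter (fun h : Fin d → Fin m => (2 : ℝ) / m < S h)).card : ℝ) := rfl
  calc ((Finset.univ.filter (fun h : Fin d → Fin m => (2 : ℝ) / m <
        ∑ j ∈ Finset.univ.filter (fun j => h j = i), x j ^ 2)).card : ℝ) * m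
      = ((Finset.univ.filter (fun h : Fin d → Fin m => (2 : ℝ) / m < S h)).card : ℝ) * m := by
        rw [hstart]
    _ ≤ (∑ h : Fin d → Fin m, Real.exp (lam * (S h - 2 / m))) * m := by
        exact mul_le_mul_of_nonneg_right h1 hmR.le
    _ = Real.exp (-(2 * lam / m)) * (∑ h : Fin d → Fin m, Real.exp (lam * S h)) * m := by
        rw [Finset.mul_sum]
        congr 1
        exact Finset.sum_congr rfl fun h _ => h1' h
    _ ≤ Real.exp (-(2 * lam / m)) * ((m : ℝ) ^ d *
          Real.exp (∑ j : Fin d, (Real.exp (lam * x j ^ 2) - 1) / m)) * m := by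
        apply mul_le_mul_of_nonneg_right _ hmR.le
        apply mul_le_mul_of_nonneg_left _ (Real.exp_pos _).le
        rw [h2]; exact h3
    _ ≤ Real.exp (-(2 * lam / m)) * ((m : ℝ) ^ d * Real.exp (3 * L)) * m := by
        apply mul_le_mul_of_nonneg_right _ hmR.le
        apply mul_le_mul_of_nonneg_left _ (Real.exp_pos _).le
        exact mul_le_mul_of_nonneg_left (Real.exp_le_exp.2 h4) (by positivity)
    _ = Real.exp (-(2 * lam / m) + 3 * L) * ((m : ℝ) ^ d * m) := by
        rw [Real.exp_add]; ring
    _ ≤ δ * (m : ℝ) ^ d := by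
        have hexp : -(2 * lam / m) + 3 * L = -L := by
          rw [hlamdef]
          field_simp
          ring
        have hval : Real.exp (-L) = δ / m := by
          rw [hLdef, ← Real.log_inv, Real.exp_log (by positivity), inv_div]
        rw [hexp, hval]
        apply le_of_eq
        field_simp
end

section
/- (Weighted balls-into-bins) Under the hypotheses of the fixed-bin step, with probability at least 1 − δ over the random hash h, the maximal bucket weight σ*² = max_{i ∈ Fin m} ∑_{j : h(j)=i} x_j² satisfies σ*² ≤ 2/m. -/
open Finset
open scoped Classical

/-- Fubini for sums over function spaces. -/
lemma sum_prod_swap (d m : ℕ) (g : Fin d → Fin m → ℝ) :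
    ∑ h : Fin d → Fin m, ∏ j, g j (h j) = ∏ j, ∑ v, g j v := by
  rw [Finset.prod_univ_sum, Fintype.piFinset_univ]

/-- Convexity of `exp` on `[0, log 2]`. -/
lemma exp_mul_log_two_le (s : ℝ) (h0 : 0 ≤ s) (h1 : s ≤ 1) :
    Real.exp (Real.log 2 * s) ≤ 1 + s := by
  have h := convexOn_exp.2 (Set.mem_univ (0 : ℝ)) (Set.mem_univ (Real.log 2))
    (by linarith : (0:ℝ) ≤ 1 - s) h0 (by ring)
  have h2 : Real.exp (Real.log 2) = 2 := Real.exp_log two_pos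
  simp only [smul_eq_mul, mul_zero, zero_add, Real.exp_zero] at h
  calc Real.exp (Real.log 2 * s) = Real.exp (s * Real.log 2) := by ring_nf
    _ ≤ (1 - s) * 1 + s * Real.exp (Real.log 2) := h
    _ = 1 + s := by rw [h2]; ring

/-- Weighted balls-into-bins: with probability at least `1 − δ`, every bucket
weight `∑_{j : h(j)=i} x_j²` is at most `2/m`. -/
theorem balls_bins (d m : ℕ) (hm : 0 < m) (δ : ℝ) (hδ : 0 < δ)
    (hδm : δ < m) (x : Fin d → ℝ) (hx : ∑ j : Fin d, x j ^ 2 = 1)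
    (hinf : ∀ j : Fin d, |x j| ≤ 1 / (2 * Real.sqrt (m * Real.log (m / δ)))) :
    1 - δ ≤ hPr d m (fun h => ∀ i : Fin m,
      ∑ j ∈ Finset.univ.filter (fun j => h j = i), x j ^ 2 ≤ (2 : ℝ) / m) := by
  have hmR : (0:ℝ) < m := by exact_mod_cast hm
  set L : ℝ := Real.log (m / δ) with hLdef
  have hL : 0 < L := Real.log_pos (by rw [lt_div_iff₀ hδ]; linarith)
  set a : ℝ := 4 * m * L with hadef
  have ha : 0 < a := by positivity
  -- bound on each x j ^ 2
  have hx2 : ∀ j, x j ^ 2 ≤ 1 / a := by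
    intro j
    have hmL : (0:ℝ) ≤ m * L := by positivity
    have h1 : x j ^ 2 ≤ (1 / (2 * Real.sqrt (m * L))) ^ 2 := by
      rw [← sq_abs]
      exact pow_le_pow_left₀ (abs_nonneg _) (hinf j) 2
    calc x j ^ 2 ≤ (1 / (2 * Real.sqrt (m * L))) ^ 2 := h1
      _ = 1 / (4 * (Real.sqrt (m * L) ^ 2)) := by ring
      _ = 1 / a := by rw [Real.sq_sqrt hmL]; rw [hadef]; ring_nf
  have hx2nn : ∀ j, (0:ℝ) ≤ x j ^ 2 := fun j => sq_nonneg _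
  set t : ℝ := Real.log 2 * a with htdef
  have hlog2 : (0.6931471803 : ℝ) < Real.log 2 := Real.log_two_gt_d9
  have ht : 0 < t := by
    have : (0:ℝ) < Real.log 2 := by linarith
    positivity
  -- the per-bucket tail bound
  have key : ∀ i : Fin m,
      ((Finset.univ.filter (fun h : Fin d → Fin m =>
        ¬ (∑ j ∈ Finset.univ.filter (fun j => h j = i), x j ^ 2 ≤ (2 : ℝ) / m))).card : ℝ)
      ≤ (δ / m) * (m : ℝ) ^ d := by
    intro i
    set S : (Fin d → Fin m) → ℝ := fun h => ∑ j ∈ Finset.univ.filter (fun j => h j = i), x j ^ 2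
      with hSdef
    set B := Finset.univ.filter (fun h : Fin d → Fin m => ¬ (S h ≤ (2 : ℝ) / m)) with hBdef
    -- Step 1: count ≤ sum of exponential weights
    have step1 : (B.card : ℝ) ≤ ∑ h ∈ B, Real.exp (t * (S h - 2 / m)) := by
      rw [Finset.card_eq_sum_ones, Nat.cast_sum]
      apply Finset.sum_le_sum
      intro h hh
      have hmem := (Finset.mem_filter.mp hh).2
      push_neg at hmem
      have : 0 ≤ t * (S h - 2 / m) := by
        apply mul_nonneg ht.le; linarith
      simpa using Real.one_le_exp this
    have step2 : ∑ h ∈ B, Real.exp (t * (S h - 2 / m))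
        ≤ ∑ h : Fin d → Fin m, Real.exp (t * (S h - 2 / m)) := by
      apply Finset.sum_le_sum_of_subset_of_nonneg (Finset.filter_subset _ _)
      intro _ _ _; positivity
    -- rewrite the exponential as a product
    have step3 : ∀ h : Fin d → Fin m, Real.exp (t * (S h - 2 / m))
        = Real.exp (-(2 * t) / m) * ∏ j, Real.exp (t * (if h j = i then x j ^ 2 else 0)) := by
      intro h
      rw [← Real.exp_sum, ← Real.exp_add]
      congr 1
      have : S h = ∑ j, (if h j = i then x j ^ 2 else 0) := by
        simp only [hSdef, Finset.sum_filter]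
      rw [this, ← Finset.mul_sum]
      ring
    -- interchange sum and product
    have step4 : ∑ h : Fin d → Fin m, ∏ j, Real.exp (t * (if h j = i then x j ^ 2 else 0))
        = ∏ j, ∑ v : Fin m, Real.exp (t * (if v = i then x j ^ 2 else 0)) :=
      sum_prod_swap d m (fun j v => Real.exp (t * (if v = i then x j ^ 2 else 0)))
    -- per-coordinate bound
    have step5 : ∀ j, ∑ v : Fin m, Real.exp (t * (if v = i then x j ^ 2 else 0))
        ≤ (m : ℝ) * Real.exp (a * x j ^ 2 / m) := by
      intro j
      have hsum : ∑ v : Fin m, Real.exp (t * (if v = i then x j ^ 2 else 0))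
          = (Real.exp (t * x j ^ 2) - 1) + m := by
        have hterm : ∀ v : Fin m, Real.exp (t * (if v = i then x j ^ 2 else 0))
            = (if v = i then Real.exp (t * x j ^ 2) - 1 else 0) + 1 := by
          intro v; by_cases hv : v = i <;> simp [hv]
        rw [Finset.sum_congr rfl (fun v _ => hterm v), Finset.sum_add_distrib,
          Finset.sum_ite_eq' Finset.univ i (fun _ => Real.exp (t * x j ^ 2) - 1)]
        simp [Finset.card_univ]
      have hexp : Real.exp (t * x j ^ 2) ≤ 1 + a * x j ^ 2 := by
        have h0 : 0 ≤ a * x j ^ 2 := by positivity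
        have h1 : a * x j ^ 2 ≤ 1 := by
          have h := (le_div_iff₀ ha).mp (hx2 j)
          rw [mul_comm]; exact h
        have := exp_mul_log_two_le (a * x j ^ 2) h0 h1
        calc Real.exp (t * x j ^ 2) = Real.exp (Real.log 2 * (a * x j ^ 2)) := by
              rw [htdef]; ring_nf
          _ ≤ 1 + a * x j ^ 2 := this
      have hfinal : (m:ℝ) + a * x j ^ 2 ≤ (m : ℝ) * Real.exp (a * x j ^ 2 / m) := by
        have h1 : a * x j ^ 2 / m + 1 ≤ Real.exp (a * x j ^ 2 / m) :=
          Real.add_one_le_exp _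
        calc (m:ℝ) + a * x j ^ 2 = m * (a * x j ^ 2 / m + 1) := by
              field_simp; ring
          _ ≤ m * Real.exp (a * x j ^ 2 / m) := by
              apply mul_le_mul_of_nonneg_left h1 hmR.le
      rw [hsum]; linarith
    -- combine
    have prodnn : ∀ j, (0:ℝ) ≤ ∑ v : Fin m, Real.exp (t * (if v = i then x j ^ 2 else 0)) := by
      intro j; apply Finset.sum_nonneg; intro v _; positivity
    have step6 : ∏ j, ∑ v : Fin m, Real.exp (t * (if v = i then x j ^ 2 else 0))
        ≤ (m : ℝ) ^ d * Real.exp (a / m) := by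
      calc ∏ j, ∑ v : Fin m, Real.exp (t * (if v = i then x j ^ 2 else 0))
          ≤ ∏ j, (m : ℝ) * Real.exp (a * x j ^ 2 / m) := by
            apply Finset.prod_le_prod (fun j _ => prodnn j) (fun j _ => step5 j)
        _ = (m : ℝ) ^ d * Real.exp (∑ j, a * x j ^ 2 / m) := by
            rw [Finset.prod_mul_distrib, Real.exp_sum]
            simp [Finset.card_univ]
        _ = (m : ℝ) ^ d * Real.exp (a / m) := by
            congr 1
            have : ∑ j, a * x j ^ 2 / m = (a / m) * ∑ j, x j ^ 2 := by
              rw [Finset.mul_sum]; apply Finset.sum_congr rfl; intro j _; ring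
            rw [this, hx, mul_one]
    -- the exponential is small
    have expbound : Real.exp (-(2 * t) / m) * ((m : ℝ) ^ d * Real.exp (a / m))
        ≤ (δ / m) * (m : ℝ) ^ d := by
      have harg : -(2 * t) / m + a / m ≤ -L := by
        rw [htdef, hadef]
        rw [← add_div, div_le_iff₀ hmR]
        nlinarith [hL, hmR]
      have h1 : Real.exp (-(2 * t) / m) * Real.exp (a / m) ≤ Real.exp (-L) := by
        rw [← Real.exp_add]; exact Real.exp_le_exp.mpr harg
      have h2 : Real.exp (-L) = δ / m := by
        rw [hLdef, ← Real.log_inv, Real.exp_log (by positivity)]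
        field_simp
      calc Real.exp (-(2 * t) / m) * ((m : ℝ) ^ d * Real.exp (a / m))
          = (Real.exp (-(2 * t) / m) * Real.exp (a / m)) * (m : ℝ) ^ d := by ring
        _ ≤ Real.exp (-L) * (m : ℝ) ^ d := by
            apply mul_le_mul_of_nonneg_right h1 (by positivity)
        _ = (δ / m) * (m : ℝ) ^ d := by rw [h2]
    calc (B.card : ℝ) ≤ ∑ h ∈ B, Real.exp (t * (S h - 2 / m)) := step1
      _ ≤ ∑ h : Fin d → Fin m, Real.exp (t * (S h - 2 / m)) := step2
      _ = Real.exp (-(2 * t) / m) *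
          ∑ h : Fin d → Fin m, ∏ j, Real.exp (t * (if h j = i then x j ^ 2 else 0)) := by
          rw [Finset.mul_sum]; exact Finset.sum_congr rfl (fun h _ => step3 h)
      _ = Real.exp (-(2 * t) / m) *
          ∏ j, ∑ v : Fin m, Real.exp (t * (if v = i then x j ^ 2 else 0)) := by rw [step4]
      _ ≤ Real.exp (-(2 * t) / m) * ((m : ℝ) ^ d * Real.exp (a / m)) := by
          apply mul_le_mul_of_nonneg_left step6 (Real.exp_pos _).le
      _ ≤ (δ / m) * (m : ℝ) ^ d := expbound
  -- union bound
  set P : (Fin d → Fin m) → Prop := fun h => ∀ i : Fin m,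
      ∑ j ∈ Finset.univ.filter (fun j => h j = i), x j ^ 2 ≤ (2 : ℝ) / m with hPdef
  have hbad : ((Finset.univ.filter (fun h : Fin d → Fin m => ¬ P h)).card : ℝ)
      ≤ δ * (m : ℝ) ^ d := by
    have hsub : Finset.univ.filter (fun h : Fin d → Fin m => ¬ P h)
        ⊆ Finset.univ.biUnion (fun i : Fin m => Finset.univ.filter (fun h : Fin d → Fin m =>
          ¬ (∑ j ∈ Finset.univ.filter (fun j => h j = i), x j ^ 2 ≤ (2 : ℝ) / m))) := by
      intro h hh
      have hthis := (Finset.mem_filter.mp hh).2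
      simp only [hPdef] at hthis
      push_neg at hthis
      obtain ⟨i, hi⟩ := hthis
      apply Finset.mem_biUnion.mpr
      exact ⟨i, Finset.mem_univ i,
        Finset.mem_filter.mpr ⟨Finset.mem_univ h, not_le.mpr hi⟩⟩
    calc ((Finset.univ.filter (fun h : Fin d → Fin m => ¬ P h)).card : ℝ)
        ≤ ((Finset.univ.biUnion (fun i : Fin m => Finset.univ.filter
            (fun h : Fin d → Fin m => ¬ (∑ j ∈ Finset.univ.filter (fun j => h j = i), x j ^ 2
              ≤ (2 : ℝ) / m)))).card : ℝ) := by
          exact_mod_cast Finset.card_le_card hsub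
      _ ≤ ∑ i : Fin m, ((Finset.univ.filter (fun h : Fin d → Fin m =>
            ¬ (∑ j ∈ Finset.univ.filter (fun j => h j = i), x j ^ 2 ≤ (2 : ℝ) / m))).card : ℝ) := by
          exact_mod_cast Finset.card_biUnion_le
      _ ≤ ∑ _i : Fin m, (δ / m) * (m : ℝ) ^ d := Finset.sum_le_sum (fun i _ => key i)
      _ = δ * (m : ℝ) ^ d := by
          rw [Finset.sum_const, Finset.card_univ]
          simp only [Fintype.card_fin, nsmul_eq_mul]
          field_simp
  -- conclude
  have hcard : ((Finset.univ.filter (fun h : Fin d → Fin m => P h)).card : ℝ)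
      + ((Finset.univ.filter (fun h : Fin d → Fin m => ¬ P h)).card : ℝ) = (m : ℝ) ^ d := by
    have hn := Finset.card_filter_add_card_filter_not
      (s := (Finset.univ : Finset (Fin d → Fin m))) P
    rw [Finset.card_univ, Fintype.card_fun, Fintype.card_fin, Fintype.card_fin] at hn
    exact_mod_cast hn
  rw [hPr]
  rw [le_div_iff₀ (by positivity : (0:ℝ) < (m:ℝ) ^ d)]
  have hres : (1 - δ) * (m:ℝ)^d ≤ ((Finset.univ.filter (fun h : Fin d → Fin m => P h)).card : ℝ) := by
    nlinarith [hbad, hcard, pow_pos hmR d]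
  convert hres using 4 <;> rfl
end
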